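/- (Extended superstabilization over the consistency set.) Suppose there exist v ∈ ℝ^n with v_i > 0 for all i, S ∈ ℝ^{m×n}, and a matrix-valued function M : P → ℝ^{n×n} such that for every (A, B) ∈ P: for every i, Σ_{j=1}^n M_{ij}(A, B) < v_i, and for every i, j, |A_{ij} v_j + Σ_{ℓ=1}^m B_{iℓ} S_{ℓj}| ≤ M_{ij}(A, B). Then the single gain K := S · diag(v)⁻¹ satisfies, for every (A, B) ∈ P, ‖diag(v)⁻¹ (A + B K) diag(v)‖_∞ < 1; i.e., the controller u = Kx renders A + BK W-superstable with W = diag(v)⁻¹ for all data-consistent plants simultaneously. -/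
import Mathlib


/-- The operator norm of a square real matrix induced by the vector sup-norm:
`‖C‖_∞ = max_i ∑_j |C i j|`. -/
noncomputable def matInfNorm {f : ℕ} (C : Matrix (Fin f) (Fin f) ℝ) : ℝ :=
  ⨆ i, ∑ j, |C i j|

/-- The Euclidean norm `‖v‖₂` of a finite real vector. -/
noncomputable def euclNorm {k : ℕ} (v : Fin k → ℝ) : ℝ :=
  Real.sqrt (∑ i, v i ^ 2)

/-- The residual `h⁰_t(A,B) = x̂_{t+1} − A x̂_t − B û_t`.
(The paper's states `x̂_1, …, x̂_T` are indexed here by `Fin (T+1)`, with the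
inputs `û_1, …, û_{T−1}` indexed by `Fin T`.) -/
def eivResidual {n m T : ℕ} (xhat : Fin (T + 1) → Fin n → ℝ) (uhat : Fin T → Fin m → ℝ)
    (A : Matrix (Fin n) (Fin n) ℝ) (B : Matrix (Fin n) (Fin m) ℝ) (t : Fin T) :
    Fin n → ℝ :=
  xhat t.succ - A.mulVec (xhat t.castSucc) - B.mulVec (uhat t)

/-- The stacking of blocks `v_t ∈ ℝ^k`, `t = 1..T`, into a single vector of `ℝ^{kT}`. -/
def stack2 {T k : ℕ} (v : Fin T → Fin k → ℝ) : Fin T × Fin k → ℝ :=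
  fun p => v p.1 p.2

/-- The joint consistency set `P̄` of tuples `(A, B, Δx, Δu)` satisfying the
error-in-variables dynamics with residual `h⁰` and the quadratic noise bounds
`‖F_ℓ Δx + G_ℓ Δu‖₂ ≤ 1` for `ℓ = 1..L`. -/
def consistentBar {n m T L : ℕ} (nl : Fin L → ℕ)
    (xhat : Fin (T + 1) → Fin n → ℝ) (uhat : Fin T → Fin m → ℝ)
    (F : (ℓ : Fin L) → Matrix (Fin (nl ℓ)) (Fin (T + 1) × Fin n) ℝ)
    (G : (ℓ : Fin L) → Matrix (Fin (nl ℓ)) (Fin T × Fin m) ℝ) :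
    Set (Matrix (Fin n) (Fin n) ℝ × Matrix (Fin n) (Fin m) ℝ ×
      (Fin (T + 1) → Fin n → ℝ) × (Fin T → Fin m → ℝ)) :=
  {p | (∀ t : Fin T, p.2.2.1 t.succ =
          p.1.mulVec (p.2.2.1 t.castSucc) + p.2.1.mulVec (p.2.2.2 t) +
            eivResidual xhat uhat p.1 p.2.1 t) ∧
       (∀ ℓ : Fin L,
          euclNorm ((F ℓ).mulVec (stack2 p.2.2.1) + (G ℓ).mulVec (stack2 p.2.2.2)) ≤ 1)}

/-- The consistency set `P`: the projection of `P̄` onto the plant coordinates `(A, B)`. -/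
def consistent {n m T L : ℕ} (nl : Fin L → ℕ)
    (xhat : Fin (T + 1) → Fin n → ℝ) (uhat : Fin T → Fin m → ℝ)
    (F : (ℓ : Fin L) → Matrix (Fin (nl ℓ)) (Fin (T + 1) × Fin n) ℝ)
    (G : (ℓ : Fin L) → Matrix (Fin (nl ℓ)) (Fin T × Fin m) ℝ) :
    Set (Matrix (Fin n) (Fin n) ℝ × Matrix (Fin n) (Fin m) ℝ) :=
  {q | ∃ dx du, (q.1, q.2, dx, du) ∈ consistentBar nl xhat uhat F G}

theorem stmt14 (n m T L : ℕ) (nl : Fin L → ℕ)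
    (xhat : Fin (T + 1) → Fin n → ℝ) (uhat : Fin T → Fin m → ℝ)
    (F : (ℓ : Fin L) → Matrix (Fin (nl ℓ)) (Fin (T + 1) × Fin n) ℝ)
    (G : (ℓ : Fin L) → Matrix (Fin (nl ℓ)) (Fin T × Fin m) ℝ)
    (v : Fin n → ℝ) (hv : ∀ i, 0 < v i)
    (S : Matrix (Fin m) (Fin n) ℝ)
    (M : Matrix (Fin n) (Fin n) ℝ × Matrix (Fin n) (Fin m) ℝ → Matrix (Fin n) (Fin n) ℝ)
    (hrow : ∀ q ∈ consistent nl xhat uhat F G, ∀ i, ∑ j, M q i j < v i)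
    (helem : ∀ q ∈ consistent nl xhat uhat F G, ∀ i j,
        |q.1 i j * v j + ∑ ℓ, q.2 i ℓ * S ℓ j| ≤ M q i j) :
    -- the single gain K = S · diag(v)⁻¹ W-superstabilizes every consistent plant,
    -- with W = diag(v)⁻¹ (so W⁻¹ = diag(v)):
    ∀ q ∈ consistent nl xhat uhat F G,
      matInfNorm ((Matrix.diagonal v)⁻¹ *
        (q.1 + q.2 * (S * (Matrix.diagonal v)⁻¹)) * Matrix.diagonal v) < 1 := by
  intro q hq
  have hinv : (Matrix.diagonal v)⁻¹ = Matrix.diagonal (fun i => (v i)⁻¹) := by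
    apply Matrix.inv_eq_right_inv
    rw [Matrix.diagonal_mul_diagonal,
      show (fun i => v i * (v i)⁻¹) = fun _ => (1:ℝ) from
        funext fun i => mul_inv_cancel₀ (hv i).ne', Matrix.diagonal_one]
  set C := (Matrix.diagonal v)⁻¹ *
      (q.1 + q.2 * (S * (Matrix.diagonal v)⁻¹)) * Matrix.diagonal v with hC
  have hentry : ∀ i j, C i j = (v i)⁻¹ * (q.1 i j * v j + ∑ ℓ, q.2 i ℓ * S ℓ j) := by
    intro i j
    have hvj : v j ≠ 0 := (hv j).ne'
    rw [hC, hinv, Matrix.mul_diagonal, Matrix.diagonal_mul, Matrix.add_apply,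
      Matrix.mul_apply]
    have : ∀ ℓ, q.2 i ℓ * (S * Matrix.diagonal fun i => (v i)⁻¹) ℓ j
        = q.2 i ℓ * S ℓ j * (v j)⁻¹ := by
      intro ℓ; rw [Matrix.mul_diagonal]; ring
    rw [Finset.sum_congr rfl (fun ℓ _ => this ℓ), ← Finset.sum_mul]
    linear_combination ((v i)⁻¹ * (∑ x : Fin m, q.2 i x * S x j)) * inv_mul_cancel₀ hvj
  have hrowbound : ∀ i, ∑ j, |C i j| < 1 := by
    intro i
    have hvi : (0:ℝ) < (v i)⁻¹ := inv_pos.2 (hv i)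
    have h1 : ∑ j, |C i j| ≤ (v i)⁻¹ * ∑ j, M q i j := by
      rw [Finset.mul_sum]
      refine Finset.sum_le_sum fun j _ => ?_
      rw [hentry i j, abs_mul, abs_of_pos hvi]
      exact mul_le_mul_of_nonneg_left (helem q hq i j) hvi.le
    calc ∑ j, |C i j| ≤ (v i)⁻¹ * ∑ j, M q i j := h1
      _ < (v i)⁻¹ * v i := by
          exact mul_lt_mul_of_pos_left (hrow q hq i) hvi
      _ = 1 := inv_mul_cancel₀ (hv i).ne'
  rw [matInfNorm]
  rcases Nat.eq_zero_or_pos n with h0 | hpos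
  · subst h0
    rw [Real.iSup_of_isEmpty]
    norm_num
  · have hne : Nonempty (Fin n) := ⟨⟨0, hpos⟩⟩
    obtain ⟨i0, hi0⟩ := Finite.exists_max (fun i => ∑ j, |C i j|)
    exact lt_of_le_of_lt (ciSup_le hi0) (hrowbound i0)
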